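/- If the set X* of global minimizers of f on Ω has positive Lebesgue measure μ(X*) > 0, then for every x ∈ X*, m^(k)(x) → 1/μ(X*) as k → ∞, and for every x ∉ X*, m^(k)(x) → 0 as k → ∞. -/

import Mathlib

open MeasureTheory Real Filter

/-- If μ(X*) > 0, then m^(k)(x) → 1/μ(X*) for x ∈ X*
and m^(k)(x) → 0 for x ∉ X* as k → ∞. -/
theorem stmt4 {n : ℕ} (Ω : Set (EuclideanSpace ℝ (Fin n)))
    (hΩc : IsCompact Ω) (hΩpos : 0 < volume Ω)
    (f : EuclideanSpace ℝ (Fin n) → ℝ) (hf : ContinuousOn f Ω)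
    (ρ : ℝ → ℝ) (hρ : StrictAnti ρ) (hρpos : ∀ x ∈ Ω, 0 < ρ (f x))
    (τ : EuclideanSpace ℝ (Fin n) → ℝ) (hτ : ∀ x, τ x = ρ (f x))
    (m : ℝ → EuclideanSpace ℝ (Fin n) → ℝ)
    (hm : ∀ k x, m k x = τ x ^ k / ∫ t in Ω, τ t ^ k)
    (Xstar : Set (EuclideanSpace ℝ (Fin n)))
    (hX : Xstar = {x ∈ Ω | ∀ y ∈ Ω, f x ≤ f y})
    (hXpos : 0 < volume Xstar) :
    (∀ x ∈ Xstar,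
      Tendsto (fun k : ℝ => m k x) atTop (nhds (1 / (volume Xstar).toReal))) ∧
    (∀ x ∈ Ω \ Xstar, Tendsto (fun k : ℝ => m k x) atTop (nhds 0)) := by
  have hΩne : Ω.Nonempty := by
    by_contra h
    rw [Set.not_nonempty_iff_eq_empty] at h
    simp [h] at hΩpos
  have hΩmeas : MeasurableSet Ω := hΩc.isClosed.measurableSet
  obtain ⟨x₀, hx₀Ω, hx₀⟩ := hΩc.exists_isMinOn hΩne hf
  have hx₀' : ∀ y ∈ Ω, f x₀ ≤ f y := fun y hy => hx₀ hy
  -- M = maximum of τ on Ω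
  set M : ℝ := ρ (f x₀) with hM
  have hMpos : 0 < M := hρpos x₀ hx₀Ω
  -- characterization of Xstar
  have hXsub : Xstar ⊆ Ω := by rw [hX]; exact fun x hx => hx.1
  have hτX : ∀ x ∈ Xstar, τ x = M := by
    intro x hx
    rw [hX] at hx
    have h1 : f x ≤ f x₀ := hx.2 x₀ hx₀Ω
    have h2 : f x₀ ≤ f x := hx₀' x hx.1
    rw [hτ, hM, le_antisymm h1 h2]
  have hτlt : ∀ x ∈ Ω \ Xstar, τ x < M := by
    intro x hx
    have hxΩ := hx.1
    have : f x₀ < f x := by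
      rcases lt_or_eq_of_le (hx₀' x hxΩ) with h | h
      · exact h
      · exfalso; apply hx.2; rw [hX]
        exact ⟨hxΩ, fun y hy => h ▸ hx₀' y hy⟩
    rw [hτ]; exact hρ this
  have hτpos : ∀ x ∈ Ω, 0 < τ x := fun x hx => (hτ x) ▸ hρpos x hx
  have hτle : ∀ x ∈ Ω, τ x ≤ M := by
    intro x hx
    by_cases hxX : x ∈ Xstar
    · exact (hτX x hxX).le
    · exact (hτlt x ⟨hx, hxX⟩).le
  -- Xstar is measurable
  have hXclosed : IsClosed Xstar := by
    have : Xstar = Ω ∩ f ⁻¹' (Set.Iic (f x₀)) := by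
      ext x
      rw [hX]
      constructor
      · exact fun hx => ⟨hx.1, hx.2 x₀ hx₀Ω⟩
      · exact fun hx => ⟨hx.1, fun y hy => le_trans hx.2 (hx₀' y hy)⟩
    rw [this]
    exact hf.preimage_isClosed_of_isClosed hΩc.isClosed isClosed_Iic
  have hXmeas : MeasurableSet Xstar := hXclosed.measurableSet
  have hXfin : volume Xstar < ⊤ :=
    lt_of_le_of_lt (measure_mono hXsub) hΩc.measure_lt_top
  have hμXpos : 0 < (volume Xstar).toReal := ENNReal.toReal_pos hXpos.ne' hXfin.ne
  -- τ is a.e. measurable on Ω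
  have hfae : AEMeasurable f (volume.restrict Ω) := hf.aemeasurable hΩmeas
  have hτae : AEMeasurable τ (volume.restrict Ω) := by
    have : AEMeasurable (fun x => ρ (f x)) (volume.restrict Ω) :=
      hρ.antitone.measurable.comp_aemeasurable hfae
    exact this.congr (Filter.Eventually.of_forall fun x => (hτ x).symm)
  -- key limit: ∫ (τ/M)^k → μ(X*)
  set g : ℝ → ℝ := fun k => ∫ t in Ω, (τ t / M) ^ k with hg
  have hglim : Tendsto g atTop (nhds ((volume Xstar).toReal)) := by
    have key : Tendsto g atTop (nhds (∫ t in Ω, Xstar.indicator (fun _ => (1:ℝ)) t)) := by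
      apply tendsto_integral_filter_of_dominated_convergence (fun _ => (1:ℝ))
      · filter_upwards [eventually_ge_atTop (0:ℝ)] with k hk
        exact ((Real.continuous_rpow_const hk).measurable.comp_aemeasurable
          (hτae.div_const M)).aestronglyMeasurable
      · filter_upwards [eventually_ge_atTop (0:ℝ)] with k hk
        filter_upwards [ae_restrict_mem hΩmeas] with t ht
        have h0 : 0 ≤ τ t / M := le_of_lt (div_pos (hτpos t ht) hMpos)
        have h1 : τ t / M ≤ 1 := (div_le_one hMpos).mpr (hτle t ht)
        rw [Real.norm_eq_abs, abs_of_nonneg (Real.rpow_nonneg h0 k)]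
        exact Real.rpow_le_one h0 h1 hk
      · exact integrableOn_const hΩc.measure_lt_top.ne
      · filter_upwards [ae_restrict_mem hΩmeas] with t ht
        by_cases htX : t ∈ Xstar
        · rw [Set.indicator_of_mem htX]
          have : τ t / M = 1 := by rw [hτX t htX]; field_simp
          simp only [this, Real.one_rpow]
          exact tendsto_const_nhds
        · rw [Set.indicator_of_notMem htX]
          have h0 : 0 < τ t / M := div_pos (hτpos t ht) hMpos
          have h1 : τ t / M < 1 := (div_lt_one hMpos).mpr (hτlt t ⟨ht, htX⟩)
          exact tendsto_rpow_atTop_of_base_lt_one _ (by linarith) h1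
    have : (∫ t in Ω, Xstar.indicator (fun _ => (1:ℝ)) t) = (volume Xstar).toReal := by
      rw [MeasureTheory.setIntegral_indicator hXmeas]
      have : Xstar ∩ Ω = Xstar := Set.inter_eq_left.mpr hXsub
      rw [Set.inter_comm Ω Xstar] at *
      simp only [this]
      rw [setIntegral_const, smul_eq_mul, mul_one]
      rfl
    rwa [this] at key
  -- relation between the integrals
  have hint : ∀ k : ℝ, (∫ t in Ω, τ t ^ k) = M ^ k * g k := by
    intro k
    have : g k = ∫ t in Ω, τ t ^ k / M ^ k := by
      apply setIntegral_congr_fun hΩmeas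
      intro t ht
      exact Real.div_rpow (hτpos t ht).le hMpos.le k
    rw [this, integral_div]
    field_simp [ne_of_gt (Real.rpow_pos_of_pos hMpos k)]
  have hMk : ∀ k : ℝ, (0:ℝ) < M ^ k := fun k => Real.rpow_pos_of_pos hMpos k
  have hmx : ∀ x ∈ Ω, ∀ k : ℝ, m k x = (τ x / M) ^ k / g k := by
    intro x hx k
    rw [hm, hint, Real.div_rpow (hτpos x hx).le hMpos.le, div_div]
  constructor
  · intro x hx
    have hxΩ : x ∈ Ω := hXsub hx
    have hτx : τ x / M = 1 := by rw [hτX x hx]; field_simp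
    have : Tendsto (fun k : ℝ => (τ x / M) ^ k / g k) atTop
        (nhds (1 / (volume Xstar).toReal)) := by
      apply Tendsto.div _ hglim (ne_of_gt hμXpos)
      have he : (fun k : ℝ => (τ x / M) ^ k) = fun _ => (1:ℝ) :=
        funext fun k => by rw [hτx, Real.one_rpow]
      show Tendsto (fun k : ℝ => (τ x / M) ^ k) atTop (nhds 1)
      rw [he]
      exact tendsto_const_nhds
    exact this.congr fun k => (hmx x hxΩ k).symm
  · intro x hx
    have hxΩ : x ∈ Ω := hx.1
    have h0 : 0 < τ x / M := div_pos (hτpos x hxΩ) hMpos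
    have h1 : τ x / M < 1 := (div_lt_one hMpos).mpr (hτlt x hx)
    have : Tendsto (fun k : ℝ => (τ x / M) ^ k / g k) atTop (nhds 0) := by
      have := Tendsto.div (tendsto_rpow_atTop_of_base_lt_one _ (by linarith) h1)
        hglim (ne_of_gt hμXpos)
      simpa only [zero_div, Pi.div_def] using this
    exact this.congr fun k => (hmx x hxΩ k).symm
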